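/- arXiv:2209.01070 — 7 statements merged into one kernel-verified Lean document; each statement's English description precedes it below -/
import Mathlib

section
/- Let X be a symmetric Δ-complex, α ∈ X_p a face of β ∈ X_{p+1} satisfying permissibility condition (1). If ρ, ρ' : [p] → [p+1] both glue α to β, then the induced maps f_ρ and f_{ρ'} : Aut(β) → Aut(α) differ by conjugation by a permutation of [p], i.e., there exists a permutation i of [p] with f_{ρ'}(π) = i^{-1} ∘ f_ρ(π) ∘ i for all π ∈ Aut(β). -/
structure SymDelta where
  X : ℕ → Type
  act : ∀ {p q : ℕ}, (Fin (p + 1) → Fin (q + 1)) → X q → X p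
  act_id : ∀ (p : ℕ) (x : X p), act id x = x
  act_comp : ∀ {p q r : ℕ} (θ : Fin (q + 1) → Fin (r + 1)) (φ : Fin (p + 1) → Fin (q + 1)),
    Function.Injective θ → Function.Injective φ →
    ∀ x : X r, act (θ ∘ φ) x = act φ (act θ x)

namespace SymDelta

variable (D : SymDelta)

/-- `θ` glues `α` to `β`. -/
def Glues {p q : ℕ} (θ : Fin (p + 1) → Fin (q + 1)) (α : D.X p) (β : D.X q) : Prop :=
  Function.Injective θ ∧ D.act θ β = α

/-- `α` is a face of `β`. -/
def IsFace {p q : ℕ} (α : D.X p) (β : D.X q) : Prop :=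
  ∃ θ : Fin (p + 1) → Fin (q + 1), D.Glues θ α β

/-- `α'` is in the symmetric orbit of `α`. -/
def InOrbit {p : ℕ} (α α' : D.X p) : Prop :=
  ∃ ρ : Equiv.Perm (Fin (p + 1)), D.act ⇑ρ α = α'

/-- The automorphism group of a simplex. -/
def Aut {p : ℕ} (α : D.X p) : Set (Equiv.Perm (Fin (p + 1))) :=
  {ρ | D.act ⇑ρ α = α}

/-- `α` is a permissible face of `β`. -/
def Permissible {p : ℕ} (α : D.X p) (β : D.X (p + 1)) : Prop :=
  D.IsFace α β ∧
  (∀ θ θ' : Fin (p + 1) → Fin (p + 2), D.Glues θ α β → D.Glues θ' α β →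
    Set.range θ = Set.range θ') ∧
  (∀ ρ : Fin (p + 1) → Fin (p + 2), D.Glues ρ α β →
    ∃ f : D.Aut β ≃ D.Aut α,
      ∀ π : D.Aut β, ρ ∘ ⇑((f π).1) = ⇑(π.1) ∘ ρ)

end SymDelta

/-- The map `f_ρ : Aut β → Aut α` is unique up to conjugation by a permutation of `[p]`:
if `ρ` and `ρ'` both glue `α` to `β`, then there is a permutation `i` of `[p]` with
`f_{ρ'}(π) = i⁻¹ ∘ f_ρ(π) ∘ i` for all `π ∈ Aut β`. Here `f_ρ(π)` is characterized by
`ρ ∘ f_ρ(π) = π ∘ ρ`. -/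
theorem f_unique_up_to_conjugation (D : SymDelta) {p : ℕ}
    (α : D.X p) (β : D.X (p + 1))
    (ρ ρ' : Fin (p + 1) → Fin (p + 2))
    (hρ : D.Glues ρ α β) (hρ' : D.Glues ρ' α β)
    (h1 : ∀ θ θ' : Fin (p + 1) → Fin (p + 2), D.Glues θ α β → D.Glues θ' α β →
      Set.range θ = Set.range θ') :
    ∃ i : Equiv.Perm (Fin (p + 1)),
      ∀ π : Equiv.Perm (Fin (p + 2)), π ∈ D.Aut β →
        ∀ τ τ' : Equiv.Perm (Fin (p + 1)),
          ρ ∘ ⇑τ = ⇑π ∘ ρ → ρ' ∘ ⇑τ' = ⇑π ∘ ρ' → τ' = i⁻¹ * τ * i := by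
  have hinj := hρ.1
  have hinj' := hρ'.1
  have hrange := h1 ρ ρ' hρ hρ'
  -- define i0 : Fin (p+1) → Fin (p+1) with ρ ∘ i0 = ρ'
  have hmem : ∀ x, ρ' x ∈ Set.range ρ := by
    intro x; rw [hrange]; exact ⟨x, rfl⟩
  choose i0 hi0 using hmem
  have hi0inj : Function.Injective i0 := by
    intro a b hab
    apply hinj'
    rw [← hi0 a, ← hi0 b, hab]
  have hbij : Function.Bijective i0 := (Finite.injective_iff_bijective).mp hi0inj
  refine ⟨Equiv.ofBijective i0 hbij, ?_⟩
  intro π hπ τ τ' hτ hτ'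
  set i := Equiv.ofBijective i0 hbij with hi
  have hie : ∀ x, ρ (i x) = ρ' x := hi0
  have key : ∀ x, i (τ' x) = τ (i x) := by
    intro x
    apply hinj
    rw [hie]
    have h1' := congrFun hτ' x
    have h2' := congrFun hτ (i x)
    simp only [Function.comp_apply] at h1' h2'
    rw [h1', h2', hie]
  refine Equiv.ext fun x => ?_
  simp only [Equiv.Perm.mul_apply]
  rw [← key x, Equiv.Perm.inv_def, Equiv.symm_apply_apply]
end

section
/- Let X be a symmetric Δ-complex, 0 ≤ r < p, and suppose γ ∈ X_r, α ∈ X_p, β ∈ X_{p+1} satisfy γ < α < β, with α a permissible face of β. Then there exists a p-simplex α' whose symmetric orbit differs from that of α such that γ < α' < β. -/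
/-- If `γ < α < β` with `α` a permissible face of `β`, then there is a `p`-simplex `α'`
in a different symmetric orbit from `α` with `γ < α' < β`. -/
theorem permissible_parent_has_another_child (D : SymDelta) {r p : ℕ} (hrp : r < p)
    (γ : D.X r) (α : D.X p) (β : D.X (p + 1))
    (hγα : D.IsFace γ α) (hαβ : D.IsFace α β) (hperm : D.Permissible α β) :
    ∃ α' : D.X p, ¬ D.InOrbit α α' ∧ D.IsFace γ α' ∧ D.IsFace α' β := by

  classical
  obtain ⟨ρ, hρinj, hρ⟩ := hperm.1
  obtain ⟨θ, hθinj, hθ⟩ := hγα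
  -- find j in range ρ but not in range (ρ ∘ θ)
  have hcomp_inj : Function.Injective (ρ ∘ θ) := hρinj.comp hθinj
  have hnot : ¬ (Finset.univ.image ρ ⊆ Finset.univ.image (ρ ∘ θ)) := by
    intro hsub
    have h1 : (Finset.univ.image ρ).card = p + 1 := by
      rw [Finset.card_image_of_injective _ hρinj, Finset.card_univ, Fintype.card_fin]
    have h2 : (Finset.univ.image (ρ ∘ θ)).card = r + 1 := by
      rw [Finset.card_image_of_injective _ hcomp_inj, Finset.card_univ, Fintype.card_fin]
    have := Finset.card_le_card hsub
    omega
  obtain ⟨j, hjρ, hjθ⟩ := Finset.not_subset.1 hnot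
  obtain ⟨i0, _, hi0⟩ := Finset.mem_image.1 hjρ
  have hj_ne : ∀ k, ρ (θ k) ≠ j := by
    intro k hk
    exact hjθ (Finset.mem_image.2 ⟨k, Finset.mem_univ k, hk⟩)
  have hsa_inj : Function.Injective j.succAbove := Fin.succAbove_right_injective
  refine ⟨D.act j.succAbove β, ?_, ?_, j.succAbove, hsa_inj, rfl⟩
  · -- not in orbit
    rintro ⟨σ, hσ⟩
    have hglue : D.Glues (j.succAbove ∘ ⇑σ⁻¹) α β := by
      constructor
      · exact hsa_inj.comp σ⁻¹.injective
      · rw [D.act_comp j.succAbove ⇑σ⁻¹ hsa_inj σ⁻¹.injective, ← hσ,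
          ← D.act_comp ⇑σ ⇑σ⁻¹ σ.injective σ⁻¹.injective]
        have : ⇑σ ∘ ⇑σ⁻¹ = id := by
          funext x; simp
        rw [this, D.act_id]
    have hr := hperm.2.1 ρ (j.succAbove ∘ ⇑σ⁻¹) ⟨hρinj, hρ⟩ hglue
    have hjmem : j ∈ Set.range ρ := ⟨i0, hi0⟩
    rw [hr] at hjmem
    obtain ⟨x, hx⟩ := hjmem
    have : j.succAbove (σ⁻¹ x) = j := hx
    exact Fin.succAbove_ne j (σ⁻¹ x) this
  · -- γ is a face of α'
    have hmem : ∀ k, ρ (θ k) ∈ Set.range j.succAbove := by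
      intro k
      rw [Fin.range_succAbove]
      exact hj_ne k
    choose φ hφ using hmem
    have hφinj : Function.Injective φ := by
      intro a b hab
      apply hcomp_inj
      show ρ (θ a) = ρ (θ b)
      rw [← hφ a, ← hφ b, hab]
    refine ⟨φ, hφinj, ?_⟩
    rw [← D.act_comp j.succAbove φ hsa_inj hφinj]
    have : j.succAbove ∘ φ = ρ ∘ θ := funext hφ
    rw [this, D.act_comp ρ θ hρinj hθinj, hρ, hθ]
end

section
/- Let f be a discrete Morse function on a symmetric Δ-complex X and let α ∈ X_p. Then u_f(α) and d_f(α) cannot both equal 1; i.e., it is impossible that there exist a permissible coface β ∈ X_{p+1} of α with f(α) ≥ f(β) and a permissible face γ ∈ X_{p-1} of α with f(γ) ≥ f(α). -/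
/-- A discrete Morse function on a symmetric Δ-complex. -/
structure DiscreteMorseFunction (D : SymDelta) where
  f : ∀ p : ℕ, D.X p → ℝ
  orbit_eq : ∀ (p : ℕ) (α α' : D.X p), D.InOrbit α α' → f p α = f p α'
  lt_of_not_permissible : ∀ (p : ℕ) (α : D.X p) (β : D.X (p + 1)),
    D.IsFace α β → ¬ D.Permissible α β → f p α < f (p + 1) β
  up_subsingleton : ∀ (p : ℕ) (α : D.X p) (β β' : D.X (p + 1)),
    D.Permissible α β → f (p + 1) β ≤ f p α →
    D.Permissible α β' → f (p + 1) β' ≤ f p α → D.InOrbit β β'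
  down_subsingleton : ∀ (p : ℕ) (α : D.X (p + 1)) (γ γ' : D.X p),
    D.Permissible γ α → f (p + 1) α ≤ f p γ →
    D.Permissible γ' α → f (p + 1) α ≤ f p γ' → D.InOrbit γ γ'


/-- Key lemma: if `γ < α < β` with `α` permissible in `β`, there is `α'` not in the orbit
of `α` with `γ < α' < β`. -/
lemma exists_other_face (D : SymDelta) {p : ℕ} (γ : D.X p) (α : D.X (p + 1)) (β : D.X (p + 2))
    (hγα : D.IsFace γ α) (hperm : D.Permissible α β) :
    ∃ α' : D.X (p + 1), ¬ D.InOrbit α α' ∧ D.IsFace γ α' ∧ D.IsFace α' β := by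
  obtain ⟨φ, hφinj, hφ⟩ := hγα
  obtain ⟨⟨θ, hθinj, hθ⟩, hrange, -⟩ := hperm
  have hψinj : Function.Injective (θ ∘ φ) := hθinj.comp hφinj
  obtain ⟨m, hm⟩ : ∃ m, m ∉ Set.range θ := by
    by_contra h
    push_neg at h
    have hsurj : Function.Surjective θ := fun b => h b
    have := Fintype.card_le_of_surjective θ hsurj
    simp [Fintype.card_fin] at this
  set θ' : Fin (p + 2) → Fin (p + 3) := Fin.snoc (θ ∘ φ) m with hθ'def
  have hcast : ∀ j : Fin (p + 1), θ' (Fin.castSucc j) = θ (φ j) := by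
    intro j; simp [hθ'def]
  have hlast : θ' (Fin.last (p + 1)) = m := by simp [hθ'def]
  have hθ'inj : Function.Injective θ' := by
    intro i j hij
    induction i using Fin.lastCases with
    | last =>
      induction j using Fin.lastCases with
      | last => rfl
      | cast j =>
        exfalso; apply hm
        rw [hlast, hcast] at hij
        exact ⟨φ j, hij.symm⟩
    | cast i =>
      induction j using Fin.lastCases with
      | last =>
        exfalso; apply hm
        rw [hlast, hcast] at hij
        exact ⟨φ i, hij⟩
      | cast j =>
        rw [hcast, hcast] at hij
        exact congrArg Fin.castSucc (hφinj (hθinj hij))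
  refine ⟨D.act θ' β, ?_, ?_, θ', hθ'inj, rfl⟩
  · rintro ⟨ρ, hρ⟩
    -- θ' ∘ ρ⁻¹ glues α to β
    have hρinv : D.act (⇑ρ⁻¹) (D.act θ' β) = α := by
      rw [← hρ, ← D.act_comp (⇑ρ) (⇑ρ⁻¹) ρ.injective ρ⁻¹.injective]
      have : (⇑ρ ∘ ⇑ρ⁻¹) = id := by
        funext x; simp
      rw [this, D.act_id]
    have hglue : D.Glues (θ' ∘ ⇑ρ⁻¹) α β := by
      refine ⟨hθ'inj.comp ρ⁻¹.injective, ?_⟩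
      rw [D.act_comp θ' (⇑ρ⁻¹) hθ'inj ρ⁻¹.injective, hρinv]
    have := hrange θ (θ' ∘ ⇑ρ⁻¹) ⟨hθinj, hθ⟩ hglue
    have hrng : Set.range (θ' ∘ ⇑ρ⁻¹) = Set.range θ' := by
      rw [Set.range_comp, Set.range_eq_univ.mpr ρ⁻¹.surjective, Set.image_univ]
    rw [hrng] at this
    exact hm (this ▸ ⟨Fin.last (p + 1), hlast⟩)
  · refine ⟨Fin.castSucc, Fin.castSucc_injective _, ?_⟩
    rw [← D.act_comp θ' Fin.castSucc hθ'inj (Fin.castSucc_injective _)]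
    have : (θ' ∘ Fin.castSucc) = θ ∘ φ := funext hcast
    rw [this, D.act_comp θ φ hθinj hφinj, hθ, hφ]

/-- `u_f(α)` and `d_f(α)` cannot both equal 1: there cannot simultaneously exist a
permissible coface `β` with `f(α) ≥ f(β)` and a permissible face `γ` with `f(γ) ≥ f(α)`. -/
theorem not_both_up_and_down (D : SymDelta) (F : DiscreteMorseFunction D)
    (p : ℕ) (α : D.X (p + 1)) :
    ¬ ((∃ β : D.X (p + 2), D.Permissible α β ∧ F.f (p + 2) β ≤ F.f (p + 1) α) ∧
       (∃ γ : D.X p, D.Permissible γ α ∧ F.f (p + 1) α ≤ F.f p γ)) := by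
  rintro ⟨⟨β, hβperm, hβle⟩, ⟨γ, hγperm, hγle⟩⟩
  obtain ⟨α', hnorb, hγα', hα'β⟩ := exists_other_face D γ α β hγperm.1 hβperm
  have hα'lt : F.f (p + 1) α' < F.f (p + 2) β := by
    by_cases hP : D.Permissible α' β
    · by_contra h
      push_neg at h
      exact hnorb (F.down_subsingleton (p + 1) β α α' hβperm hβle hP h)
    · exact F.lt_of_not_permissible (p + 1) α' β hα'β hP
  have hα'γ : F.f (p + 1) α' < F.f p γ := lt_of_lt_of_le hα'lt (le_trans hβle hγle)
  by_cases hQ : D.Permissible γ α'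
  · exact hnorb (F.up_subsingleton p γ α α' hγperm hγle hQ hα'γ.le)
  · exact absurd (F.lt_of_not_permissible p γ α' hγα' hQ) (not_lt.mpr hα'γ.le)
end

section
/- Let X be a symmetric Δ-complex with a discrete Morse function f, let σ be a p-simplex and τ a k-simplex with σ < τ and k > p. Then there exists a (p+1)-simplex τ' with σ < τ' and f(τ') ≤ f(τ). -/
/-- If `σ < τ` with `dim τ = k > p = dim σ`, then there is a `(p+1)`-simplex `τ'`
with `σ < τ'` and `f(τ') ≤ f(τ)`. -/
theorem exists_coface_one_dim_above (D : SymDelta) (F : DiscreteMorseFunction D)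
    {p k : ℕ} (σ : D.X p) (τ : D.X k) (hpk : p < k) (h : D.IsFace σ τ) :
    ∃ τ' : D.X (p + 1), D.IsFace σ τ' ∧ F.f (p + 1) τ' ≤ F.f k τ := by
  induction k using Nat.strong_induction_on with
  | _ k ih =>
  rcases eq_or_lt_of_le (Nat.succ_le_of_lt hpk) with hk | hk
  · subst hk
    exact ⟨τ, h, le_refl _⟩
  · obtain ⟨m, rfl⟩ : ∃ m, k = m + 1 := ⟨k - 1, by omega⟩
    have hm : p < m := by omega
    obtain ⟨θ, hθinj, hθ⟩ := h
    -- find two distinct vertices not in the range of θ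
    have hcard : 1 < ((Finset.image θ Finset.univ)ᶜ : Finset (Fin (m + 2))).card := by
      have h1 : (Finset.image θ Finset.univ).card ≤ p + 1 := by
        calc (Finset.image θ Finset.univ).card
            ≤ (Finset.univ : Finset (Fin (p + 1))).card := Finset.card_image_le
          _ = p + 1 := by simp
      have h2 : ((Finset.image θ Finset.univ)ᶜ : Finset (Fin (m + 2))).card
          = (m + 2) - (Finset.image θ Finset.univ).card := by
        rw [Finset.card_compl]; simp
      omega
    obtain ⟨v₁, hv₁, v₂, hv₂, hne⟩ := Finset.one_lt_card.mp hcard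
    have hnr : ∀ v : Fin (m + 2), v ∈ (Finset.image θ Finset.univ)ᶜ →
        v ∉ Set.range θ := by
      intro v hv hvr
      obtain ⟨j, hj⟩ := hvr
      simp only [Finset.mem_compl, Finset.mem_image] at hv
      exact hv ⟨j, Finset.mem_univ j, hj⟩
    have hv₁' := hnr v₁ hv₁
    have hv₂' := hnr v₂ hv₂
    -- codimension-one faces of τ containing σ
    have hglue : ∀ v : Fin (m + 2), D.Glues v.succAbove (D.act v.succAbove τ) τ :=
      fun v => ⟨Fin.succAbove_right_injective, rfl⟩
    have hface : ∀ v : Fin (m + 2), v ∉ Set.range θ →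
        D.IsFace σ (D.act v.succAbove τ) := by
      intro v hv
      have hchoice : ∀ j, ∃ y, v.succAbove y = θ j := by
        intro j
        exact Fin.exists_succAbove_eq (fun e => hv ⟨j, e⟩)
      choose φ hφ using hchoice
      have hφinj : Function.Injective φ := by
        intro a b hab
        exact hθinj (by rw [← hφ a, ← hφ b, hab])
      refine ⟨φ, hφinj, ?_⟩
      have hcomp : v.succAbove ∘ φ = θ := funext hφ
      calc D.act φ (D.act v.succAbove τ)
          = D.act (v.succAbove ∘ φ) τ :=
            (D.act_comp v.succAbove φ Fin.succAbove_right_injective hφinj τ).symm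
        _ = σ := by rw [hcomp, hθ]
    -- at least one of the two faces has strictly smaller value
    have hlt : F.f m (D.act v₁.succAbove τ) < F.f (m + 1) τ ∨
        F.f m (D.act v₂.succAbove τ) < F.f (m + 1) τ := by
      by_contra hcon
      push_neg at hcon
      obtain ⟨h1, h2⟩ := hcon
      have hp1 : D.Permissible (D.act v₁.succAbove τ) τ := by
        by_contra hnp
        exact absurd (F.lt_of_not_permissible m _ τ ⟨_, hglue v₁⟩ hnp) (not_lt.mpr h1)
      have hp2 : D.Permissible (D.act v₂.succAbove τ) τ := by
        by_contra hnp
        exact absurd (F.lt_of_not_permissible m _ τ ⟨_, hglue v₂⟩ hnp) (not_lt.mpr h2)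
      obtain ⟨ρ, hρ⟩ := F.down_subsingleton m τ _ _ hp1 h1 hp2 h2
      have hg : D.Glues (v₁.succAbove ∘ ⇑ρ) (D.act v₂.succAbove τ) τ := by
        refine ⟨Fin.succAbove_right_injective.comp ρ.injective, ?_⟩
        rw [D.act_comp v₁.succAbove ⇑ρ Fin.succAbove_right_injective ρ.injective, hρ]
      have hrange := hp2.2.1 _ _ hg ⟨Fin.succAbove_right_injective, rfl⟩
      rw [ρ.surjective.range_comp, Fin.range_succAbove, Fin.range_succAbove] at hrange
      exact hne (Set.singleton_eq_singleton_iff.mp (compl_inj_iff.mp hrange))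
    rcases hlt with h' | h'
    · obtain ⟨τ', hf', hle'⟩ := ih m (by omega) (D.act v₁.succAbove τ) hm (hface v₁ hv₁')
      exact ⟨τ', hf', hle'.trans h'.le⟩
    · obtain ⟨τ', hf', hle'⟩ := ih m (by omega) (D.act v₂.succAbove τ) hm (hface v₂ hv₂')
      exact ⟨τ', hf', hle'.trans h'.le⟩
end

section
/- Let Δ^p ⊂ ℝ^{p+1} be the standard p-simplex and let σ be its facet given by t_p = 0. The map F : Δ^p × [0,1] → Δ^p, F(a,t) = a − t·m_a·v, where m_a = min_{0≤i≤p−1} a_i and v = (1,1,…,1,−p), is a strong deformation retraction from Δ^p onto ∂Δ^p minus the relative interior of σ: F is continuous, F(a,0) = a, F(a,1) ∈ ∂Δ^p \ σ°, and F(a,t) = a for all t whenever a ∈ ∂Δ^p \ σ°. -/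
/-- `m_a = min_{0 ≤ i ≤ p-1} a_i`. -/
noncomputable def mval {p : ℕ} (a : Fin (p + 1) → ℝ) : ℝ :=
  ⨅ i : Fin p, a i.castSucc

/-- The retraction `F(a,t) = a - t · m_a · v` with `v = (1,…,1,-p)`. -/
noncomputable def retr {p : ℕ} (a : Fin (p + 1) → ℝ) (t : ℝ) : Fin (p + 1) → ℝ :=
  fun i => a i - t * mval a * (if (i : ℕ) = p then -(p : ℝ) else 1)

/-- The boundary `∂Δ^p`: points of the simplex with some zero coordinate. -/
def simplexBoundary (p : ℕ) : Set (Fin (p + 1) → ℝ) :=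
  {a | a ∈ stdSimplex ℝ (Fin (p + 1)) ∧ ∃ i, a i = 0}

/-- The relative interior `σ°` of the facet `t_p = 0`. -/
def facetInterior (p : ℕ) : Set (Fin (p + 1) → ℝ) :=
  {a | a ∈ stdSimplex ℝ (Fin (p + 1)) ∧ a (Fin.last p) = 0 ∧ ∀ i : Fin p, 0 < a i.castSucc}

lemma mval_le {p : ℕ} (a : Fin (p + 1) → ℝ) (i : Fin p) : mval a ≤ a i.castSucc :=
  ciInf_le (Finite.bddBelow_range _) i

lemma mval_nonneg {p : ℕ} (hp : 0 < p) (a : Fin (p + 1) → ℝ)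
    (ha : ∀ i, 0 ≤ a i) : 0 ≤ mval a := by
  haveI : Nonempty (Fin p) := ⟨⟨0, hp⟩⟩
  exact le_ciInf fun i => ha _

lemma mval_exists {p : ℕ} (hp : 0 < p) (a : Fin (p + 1) → ℝ) :
    ∃ i : Fin p, mval a = a i.castSucc := by
  haveI : Nonempty (Fin p) := ⟨⟨0, hp⟩⟩
  obtain ⟨i, hi⟩ := Finite.exists_min (fun i : Fin p => a i.castSucc)
  exact ⟨i, le_antisymm (mval_le a i) (le_ciInf hi)⟩

lemma mval_eq_zero {p : ℕ} (hp : 0 < p) (a : Fin (p + 1) → ℝ)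
    (ha : ∀ i, 0 ≤ a i) (i : Fin p) (h : a i.castSucc = 0) : mval a = 0 :=
  le_antisymm (h ▸ mval_le a i) (mval_nonneg hp a ha)

/-- `F` is a strong deformation retraction of `Δ^p` onto `∂Δ^p \ σ°`. -/
theorem retr_strong_deformation_retraction {p : ℕ} (hp : 0 < p) :
    Continuous (fun x : (Fin (p + 1) → ℝ) × ℝ => retr x.1 x.2) ∧
    (∀ a ∈ stdSimplex ℝ (Fin (p + 1)), ∀ t ∈ Set.Icc (0 : ℝ) 1,
      retr a t ∈ stdSimplex ℝ (Fin (p + 1))) ∧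
    (∀ a ∈ stdSimplex ℝ (Fin (p + 1)), retr a 0 = a) ∧
    (∀ a ∈ stdSimplex ℝ (Fin (p + 1)), retr a 1 ∈ simplexBoundary p \ facetInterior p) ∧
    (∀ a ∈ simplexBoundary p \ facetInterior p, ∀ t ∈ Set.Icc (0 : ℝ) 1, retr a t = a) := by
  haveI : Nonempty (Fin p) := ⟨⟨0, hp⟩⟩
  -- sum of the vector v is zero
  have hvsum : ∑ i : Fin (p + 1), (if (i : ℕ) = p then -(p : ℝ) else 1) = 0 := by
    rw [Fin.sum_univ_castSucc]
    have h1 : ∀ i : Fin p, (if ((i.castSucc : Fin (p+1)) : ℕ) = p then -(p : ℝ) else 1) = 1 := by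
      intro i
      simp [Nat.ne_of_lt i.isLt]
    rw [Finset.sum_congr rfl fun i _ => h1 i]
    simp
  -- membership in simplex
  have hmem : ∀ a ∈ stdSimplex ℝ (Fin (p + 1)), ∀ t ∈ Set.Icc (0 : ℝ) 1,
      retr a t ∈ stdSimplex ℝ (Fin (p + 1)) := by
    intro a ha t ht
    have hm0 : 0 ≤ mval a := mval_nonneg hp a ha.1
    have htm : t * mval a ≤ mval a := by
      nlinarith [ht.2, hm0]
    have htm0 : 0 ≤ t * mval a := mul_nonneg ht.1 hm0
    constructor
    · intro i
      unfold retr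
      by_cases h : (i : ℕ) = p
      · rw [if_pos h]
        have := ha.1 i
        nlinarith
      · simp only [if_neg h, mul_one]
        have hi : (i : ℕ) < p := lt_of_le_of_ne (Nat.lt_succ_iff.mp i.isLt) h
        have : i = (⟨(i : ℕ), hi⟩ : Fin p).castSucc := by
          ext; simp
        have hle : mval a ≤ a i := by rw [this]; exact mval_le a _
        linarith
    · unfold retr
      rw [Finset.sum_sub_distrib, ← Finset.mul_sum, hvsum, mul_zero, sub_zero]
      exact ha.2
  refine ⟨?_, hmem, ?_, ?_, ?_⟩
  · -- continuity
    have hmc : Continuous (fun a : Fin (p + 1) → ℝ => mval a) := by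
      have : (fun a : Fin (p + 1) → ℝ => mval a)
          = fun a => Finset.univ.inf' Finset.univ_nonempty (fun i : Fin p => a i.castSucc) := by
        funext a
        rw [Finset.inf'_univ_eq_ciInf]
        rfl
      rw [this]
      exact Continuous.finset_inf'_apply _ fun i _ => continuous_apply _
    refine continuous_pi fun i => ?_
    unfold retr
    exact ((continuous_apply i).comp continuous_fst).sub
      ((continuous_snd.mul (hmc.comp continuous_fst)).mul continuous_const)
  · -- t = 0
    intro a _; funext i; simp [retr]
  · -- t = 1
    intro a ha
    obtain ⟨i0, hi0⟩ := mval_exists hp a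
    have hz : retr a 1 i0.castSucc = 0 := by
      unfold retr
      simp [Nat.ne_of_lt i0.isLt, hi0]
    refine ⟨⟨hmem a ha 1 ⟨zero_le_one, le_refl 1⟩, i0.castSucc, hz⟩, ?_⟩
    intro hint
    exact absurd hz (ne_of_gt (hint.2.2 i0))
  · -- fixed on boundary minus facet interior
    intro a ⟨⟨ha, i, hi⟩, hni⟩ t _
    have hm : mval a = 0 := by
      by_cases h : (i : ℕ) = p
      · -- a (last p) = 0, so some earlier coordinate is 0
        have hlast : a (Fin.last p) = 0 := by
          have : i = Fin.last p := Fin.ext h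
          rwa [this] at hi
        simp only [facetInterior, Set.mem_setOf_eq, not_and] at hni
        have := hni ha hlast
        push_neg at this
        obtain ⟨j, hj⟩ := this
        exact mval_eq_zero hp a ha.1 j (le_antisymm hj (ha.1 _))
      · have hi' : (i : ℕ) < p := lt_of_le_of_ne (Nat.lt_succ_iff.mp i.isLt) h
        have : i = (⟨(i : ℕ), hi'⟩ : Fin p).castSucc := by ext; simp
        exact mval_eq_zero hp a ha.1 ⟨(i : ℕ), hi'⟩ (this ▸ hi)
    funext j
    simp [retr, hm]
end

section
/- Let P be a finite poset and M an acyclic partial matching on P. Then there exists a function g : P → ℝ that is strictly decreasing along each directed path of the associated directed Hasse diagram (edges of the Hasse diagram oriented from larger to smaller element, with the orientation reversed on edges belonging to M). -/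
/-- A partial matching on a poset: a set of covering pairs such that each element
belongs to at most one pair. -/
def IsPartialMatching {P : Type*} [PartialOrder P] (M : Set (P × P)) : Prop :=
  (∀ e ∈ M, e.1 ⋖ e.2) ∧ ∀ a : P, {e | e ∈ M ∧ (e.1 = a ∨ e.2 = a)}.Subsingleton

/-- The directed edges of the modified Hasse diagram: Hasse edges oriented downward,
with matched edges reversed (oriented upward). -/
def MatchStep {P : Type*} [PartialOrder P] (M : Set (P × P)) (x y : P) : Prop :=
  (y ⋖ x ∧ (y, x) ∉ M) ∨ (x, y) ∈ M

/-- Given an acyclic partial matching on a finite poset, there is a real-valued function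
strictly decreasing along every directed edge (hence along every directed path) of the
modified Hasse diagram. -/
theorem exists_decreasing_function {P : Type*} [Fintype P] [PartialOrder P]
    (M : Set (P × P)) (hM : IsPartialMatching M)
    (hacyc : ∀ x : P, ¬ Relation.TransGen (MatchStep M) x x) :
    ∃ g : P → ℝ, ∀ x y : P, MatchStep M x y → g y < g x := by
  classical
  refine ⟨fun x => ((Finset.univ.filter
      (fun z => Relation.TransGen (MatchStep M) x z)).card : ℝ), ?_⟩
  intro x y hxy
  have hss : Finset.univ.filter (fun z => Relation.TransGen (MatchStep M) y z) ⊂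
      Finset.univ.filter (fun z => Relation.TransGen (MatchStep M) x z) := by
    constructor
    · intro z hz
      simp only [Finset.mem_filter, Finset.mem_univ, true_and] at hz ⊢
      exact Relation.TransGen.head hxy hz
    · intro hsub
      have hy : y ∈ Finset.univ.filter
          (fun z => Relation.TransGen (MatchStep M) x z) := by
        simp only [Finset.mem_filter, Finset.mem_univ, true_and]
        exact Relation.TransGen.single hxy
      have := hsub hy
      simp only [Finset.mem_filter, Finset.mem_univ, true_and] at this
      exact hacyc y this
  dsimp only
  exact_mod_cast Finset.card_lt_card hss
end

section
/- Let X be a symmetric Δ-complex, Δ^p the standard simplex, and α ∈ X_p. If two points a, b in the interior of Δ^p satisfy (α, a) ∼ (α, b) in the geometric realization |X| (i.e., they map to the same point), then there exists π ∈ Aut(α) with π·a = b, where π acts by permuting barycentric coordinates. -/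
open Finset in
/-- The pushforward `θ_*` on barycentric coordinates. -/
noncomputable def push {p q : ℕ} (θ : Fin p → Fin q) (t : Fin p → ℝ) : Fin q → ℝ :=
  fun i => ∑ j ∈ Finset.univ.filter (fun j => θ j = i), t j

/-- The generating relation of the geometric realization: `(x, θ_* a) ∼ (θ* x, a)`. -/
def RealRel (D : SymDelta) :
    (Σ p : ℕ, D.X p × (Fin (p + 1) → ℝ)) → (Σ p : ℕ, D.X p × (Fin (p + 1) → ℝ)) → Prop :=
  fun s t => ∃ (p q : ℕ) (θ : Fin (p + 1) → Fin (q + 1)) (x : D.X q) (a : Fin (p + 1) → ℝ),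
    Function.Injective θ ∧ s = ⟨q, (x, push θ a)⟩ ∧ t = ⟨p, (D.act θ x, a)⟩


lemma push_apply_inj {p q : ℕ} {θ : Fin p → Fin q} (hθ : Function.Injective θ)
    (a : Fin p → ℝ) (k : Fin p) : push θ a (θ k) = a k := by
  simp [push, Finset.filter_eq', hθ.eq_iff]

lemma push_comp {p q r : ℕ} (φ : Fin q → Fin r) (θ : Fin p → Fin q) (a : Fin p → ℝ) :
    push (φ ∘ θ) a = push φ (push θ a) := by
  funext i
  simp only [push]
  rw [← Finset.sum_biUnion]
  · congr 1
    ext k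
    simp
  · intro x hx y hy hxy
    simp only [Finset.disjoint_left, Finset.mem_filter, Finset.mem_univ, true_and]
    intro z hz hz'
    exact hxy (hz ▸ hz' ▸ rfl)

/-- Invariant: every point in the chain is a coface image of `(α, a)`. -/
def ChainInv (D : SymDelta) {p : ℕ} (α : D.X p) (a : Fin (p + 1) → ℝ)
    (s : Σ q : ℕ, D.X q × (Fin (q + 1) → ℝ)) : Prop :=
  ∃ θ : Fin (p + 1) → Fin (s.1 + 1),
    Function.Injective θ ∧ D.act θ s.2.1 = α ∧ s.2.2 = push θ a

lemma inv_iff_of_rel (D : SymDelta) {p : ℕ} (α : D.X p) (a : Fin (p + 1) → ℝ)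
    (hai : ∀ i, 0 < a i) {s t : Σ q : ℕ, D.X q × (Fin (q + 1) → ℝ)}
    (h : RealRel D s t) : ChainInv D α a s ↔ ChainInv D α a t := by
  obtain ⟨p', q', θ', x, a', hθ', hs, ht⟩ := h
  subst hs; subst ht
  constructor
  · rintro ⟨θ, hθinj, hact, hcoord⟩
    dsimp only at θ hact hcoord ⊢
    -- `down` step
    have hrange : ∀ k, ∃ j, θ' j = θ k := by
      intro k
      by_contra hcon
      push_neg at hcon
      have h0 : push θ' a' (θ k) = 0 := by
        simp only [push]
        rw [Finset.sum_eq_zero]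
        intro j hj
        simp only [Finset.mem_filter] at hj
        exact absurd hj.2 (hcon j)
      rw [hcoord] at h0
      rw [push_apply_inj hθinj] at h0
      exact absurd h0 (ne_of_gt (hai k))
    choose ψ hψ using hrange
    have hψinj : Function.Injective ψ := by
      intro j k hjk
      apply hθinj
      rw [← hψ, ← hψ, hjk]
    refine ⟨ψ, hψinj, ?_, ?_⟩
    · rw [← D.act_comp θ' ψ hθ' hψinj x]
      have : θ' ∘ ψ = θ := funext hψ
      rw [this, hact]
    · funext j
      show a' j = push ψ a j
      have h1 : a' j = push θ' a' (θ' j) := (push_apply_inj hθ' a' j).symm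
      rw [h1, hcoord]
      simp only [push]
      congr 1
      ext k
      simp only [Finset.mem_filter, Finset.mem_univ, true_and]
      rw [← hψ k, hθ'.eq_iff]
  · rintro ⟨θ, hθinj, hact, hcoord⟩
    dsimp only at θ hact hcoord ⊢
    -- `up` step
    refine ⟨θ' ∘ θ, hθ'.comp hθinj, ?_, ?_⟩
    · rw [D.act_comp θ' θ hθ' hθinj x, hact]
    · rw [push_comp, ← hcoord]

lemma push_id {p : ℕ} (a : Fin p → ℝ) : push id a = a := by
  funext i
  simp [push, Finset.filter_eq']

/-- If two interior points `a`, `b` of `Δ^p` satisfy `(α,a) ∼ (α,b)` in the geometric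
realization, then they differ by an automorphism of `α` permuting barycentric coordinates. -/
theorem interior_points_identified_by_aut (D : SymDelta) {p : ℕ} (α : D.X p)
    (a b : Fin (p + 1) → ℝ)
    (ha : a ∈ stdSimplex ℝ (Fin (p + 1))) (hb : b ∈ stdSimplex ℝ (Fin (p + 1)))
    (hai : ∀ i, 0 < a i) (hbi : ∀ i, 0 < b i)
    (hrel : Relation.EqvGen (RealRel D) ⟨p, (α, a)⟩ ⟨p, (α, b)⟩) :
    ∃ π : Equiv.Perm (Fin (p + 1)), π ∈ D.Aut α ∧ push ⇑π a = b := by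
  have key : ∀ s t, Relation.EqvGen (RealRel D) s t → (ChainInv D α a s ↔ ChainInv D α a t) := by
    intro s t h
    induction h with
    | rel s t h => exact inv_iff_of_rel D α a hai h
    | refl s => exact Iff.rfl
    | symm _ _ _ ih => exact ih.symm
    | trans _ _ _ _ _ ih1 ih2 => exact ih1.trans ih2
  have h0 : ChainInv D α a ⟨p, (α, a)⟩ :=
    ⟨id, Function.injective_id, D.act_id p α, (push_id a).symm⟩
  obtain ⟨θ, hθinj, hact, hcoord⟩ := (key _ _ hrel).mp h0
  have hbij : Function.Bijective θ := Finite.injective_iff_bijective.mp hθinj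
  exact ⟨Equiv.ofBijective θ hbij, hact, hcoord.symm⟩
end
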